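/- The function γ₂ : N × N → 𝔽ₚ is a normalized 2-cocycle on N with values in 𝔽ₚ (for the trivial N-action): γ₂(a, 1) = γ₂(1, a) = 0 for every a ∈ N, and γ₂(b, c) − γ₂(a·b, c) + γ₂(a, b·c) − γ₂(a, b) = 0 for all a, b, c ∈ N. -/
import Mathlib


/-- `A` is an upper triangular unipotent 3×3 matrix over `ℤ_[p]`: diagonal entries `1`,
entries below the diagonal `0`.  The group `N` of the paper is the set of such matrices. -/
def IsUnipotentUpperTriangular {p : ℕ} [Fact p.Prime]
    (A : Matrix (Fin 3) (Fin 3) ℤ_[p]) : Prop :=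
  (∀ i : Fin 3, A i i = 1) ∧ ∀ i j : Fin 3, j < i → A i j = 0

/-- The 2-cochain `γ₂(a, b) = π(a₁₂·b₁₃ + q(a₁₂)·b₂₃)` of the paper, where `q` is the
"halving" function with `2·q(x) = x² − x`. -/
noncomputable def gammaTwo {p : ℕ} [Fact p.Prime] (q : ℤ_[p] → ℤ_[p])
    (A B : Matrix (Fin 3) (Fin 3) ℤ_[p]) : ZMod p :=
  PadicInt.toZMod (A 0 1 * B 0 2 + q (A 0 1) * B 1 2)

lemma q_zero {p : ℕ} [Fact p.Prime] (q : ℤ_[p] → ℤ_[p])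
    (hq : ∀ x : ℤ_[p], 2 * q x = x ^ 2 - x) : q 0 = 0 := by
  have h2 : (2 : ℤ_[p]) ≠ 0 := two_ne_zero
  apply mul_left_cancel₀ h2
  rw [mul_zero]
  simpa using hq 0

lemma q_add {p : ℕ} [Fact p.Prime] (q : ℤ_[p] → ℤ_[p])
    (hq : ∀ x : ℤ_[p], 2 * q x = x ^ 2 - x) (a b : ℤ_[p]) :
    q (a + b) = q a + q b + a * b := by
  have h2 : (2 : ℤ_[p]) ≠ 0 := two_ne_zero
  apply mul_left_cancel₀ h2
  linear_combination hq (a + b) - hq a - hq b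

/-- `γ₂` is a normalized 2-cocycle on `N` with values in `𝔽_p` (trivial
action). -/
theorem stmt_13 {p : ℕ} [Fact p.Prime]
    (q : ℤ_[p] → ℤ_[p]) (hq : ∀ x : ℤ_[p], 2 * q x = x ^ 2 - x) :
    (∀ A : Matrix (Fin 3) (Fin 3) ℤ_[p], IsUnipotentUpperTriangular A →
      gammaTwo q A 1 = 0 ∧ gammaTwo q 1 A = 0) ∧
    (∀ A B C : Matrix (Fin 3) (Fin 3) ℤ_[p],
      IsUnipotentUpperTriangular A → IsUnipotentUpperTriangular B →
      IsUnipotentUpperTriangular C →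
      gammaTwo q B C - gammaTwo q (A * B) C + gammaTwo q A (B * C)
        - gammaTwo q A B = 0) := by
  constructor
  · intro A hA
    constructor
    · simp [gammaTwo, Matrix.one_apply]
    · simp [gammaTwo, Matrix.one_apply, q_zero q hq]
  · intro A B C hA hB hC
    obtain ⟨hAd, hAl⟩ := hA
    obtain ⟨hBd, hBl⟩ := hB
    obtain ⟨hCd, hCl⟩ := hC
    have hA10 : A 1 0 = 0 := hAl 1 0 (by decide)
    have hB10 : B 1 0 = 0 := hBl 1 0 (by decide)
    have hC10 : C 1 0 = 0 := hCl 1 0 (by decide)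
    have hA21 : A 2 1 = 0 := hAl 2 1 (by decide)
    have hB21 : B 2 1 = 0 := hBl 2 1 (by decide)
    have hC21 : C 2 1 = 0 := hCl 2 1 (by decide)
    have hA20 : A 2 0 = 0 := hAl 2 0 (by decide)
    have hB20 : B 2 0 = 0 := hBl 2 0 (by decide)
    have hC20 : C 2 0 = 0 := hCl 2 0 (by decide)
    simp only [gammaTwo, Matrix.mul_apply, Fin.sum_univ_three,
      hAd 0, hAd 1, hAd 2, hBd 0, hBd 1, hBd 2, hCd 0, hCd 1, hCd 2,
      hA10, hB10, hC10, hA21, hB21, hC21, hA20, hB20, hC20,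
      one_mul, mul_one, zero_mul, mul_zero, add_zero, zero_add]
    rw [← map_sub, ← map_add, ← map_sub, q_add q hq,
      ← map_zero (PadicInt.toZMod (p := p))]
    congr 1
    ring
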